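/- The extended angular momentum C(r,φ,w) := e^w g(r) sin φ, where g(r) = exp(−1/r^2) for r > 0 and g(0) = 0, is a first integral of the regularized logarithm problem: along any solution of the regularized equations, d/dτ (e^{w(τ)} g(r(τ)) sin φ(τ)) = 0 for r(τ) > 0. -/

import Mathlib

noncomputable def gExt (r : ℝ) : ℝ := if 0 < r then Real.exp (-1 / r ^ 2) else 0

/-- The extended angular momentum `C(r,φ,w) = e^w g(r) sin φ` is a first
integral of the regularized logarithm problem: along any solution,
`d/dτ (e^{w(τ)} g(r(τ)) sin φ(τ)) = 0` wherever `r(τ) > 0`. -/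
theorem angular_momentum_first_integral (r φ ψ w : ℝ → ℝ)
    (hr : ∀ τ, HasDerivAt r
      (-((r τ) ^ 3 / ((r τ) ^ 2 + 2)) * Real.exp (2 * w τ) * Real.cos (φ τ)) τ)
    (hφ : ∀ τ, HasDerivAt φ ((Real.exp (2 * w τ) - (r τ) ^ 2) * Real.sin (φ τ)) τ)
    (hψ : ∀ τ, HasDerivAt ψ ((r τ) ^ 2 * Real.sin (φ τ)) τ)
    (hw : ∀ τ, HasDerivAt w
      ((r τ) ^ 2 * (1 - Real.exp (2 * w τ) / ((r τ) ^ 2 + 2)) * Real.cos (φ τ)) τ) :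
    ∀ τ, 0 < r τ →
      HasDerivAt (fun s => Real.exp (w s) * gExt (r s) * Real.sin (φ s)) 0 τ := by
  intro τ hrτ
  have hr0 : r τ ≠ 0 := ne_of_gt hrτ
  have hden : (r τ) ^ 2 + 2 ≠ 0 := by positivity
  have hev : ∀ᶠ s in nhds τ, 0 < r s :=
    (hr τ).continuousAt.eventually (eventually_gt_nhds hrτ)
  have heq : (fun s => Real.exp (w s) * Real.exp (-1 / (r s) ^ 2) * Real.sin (φ s))
      =ᶠ[nhds τ] (fun s => Real.exp (w s) * gExt (r s) * Real.sin (φ s)) := by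
    filter_upwards [hev] with s hs
    simp [gExt, hs]
  have hsq : HasDerivAt (fun s => (r s) ^ 2)
      ((2 : ℕ) * r τ ^ 1 *
        (-((r τ) ^ 3 / ((r τ) ^ 2 + 2)) * Real.exp (2 * w τ) * Real.cos (φ τ))) τ :=
    (hr τ).pow 2
  have hsq0 : (r τ) ^ 2 ≠ 0 := pow_ne_zero 2 hr0
  have hinv := hsq.inv hsq0
  have hinner : HasDerivAt (fun s => -1 / (r s) ^ 2)
      (((2 : ℕ) * r τ ^ 1 *
        (-((r τ) ^ 3 / ((r τ) ^ 2 + 2)) * Real.exp (2 * w τ) * Real.cos (φ τ))) /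
        ((r τ) ^ 2) ^ 2) τ := by
    have h := hinv.neg
    have hfun : (-(fun s => (r s) ^ 2)⁻¹) = (fun s => -1 / (r s) ^ 2) := by
      funext s; simp only [Pi.neg_apply, Pi.inv_apply]; ring
    rw [hfun] at h
    rw [neg_div, neg_neg] at h
    exact h
  have hB : HasDerivAt (fun s => Real.exp (-1 / (r s) ^ 2))
      (Real.exp (-1 / (r τ) ^ 2) *
        (((2 : ℕ) * r τ ^ 1 *
          (-((r τ) ^ 3 / ((r τ) ^ 2 + 2)) * Real.exp (2 * w τ) * Real.cos (φ τ))) /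
          ((r τ) ^ 2) ^ 2)) τ := hinner.exp
  have hA : HasDerivAt (fun s => Real.exp (w s))
      (Real.exp (w τ) *
        ((r τ) ^ 2 * (1 - Real.exp (2 * w τ) / ((r τ) ^ 2 + 2)) * Real.cos (φ τ))) τ :=
    (hw τ).exp
  have hS : HasDerivAt (fun s => Real.sin (φ s))
      (Real.cos (φ τ) * ((Real.exp (2 * w τ) - (r τ) ^ 2) * Real.sin (φ τ))) τ :=
    (hφ τ).sin
  have hF := (hA.mul hB).mul hS
  have hzero :
      (Real.exp (w τ) *
          ((r τ) ^ 2 * (1 - Real.exp (2 * w τ) / ((r τ) ^ 2 + 2)) * Real.cos (φ τ)) *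
            Real.exp (-1 / (r τ) ^ 2) +
        Real.exp (w τ) *
          (Real.exp (-1 / (r τ) ^ 2) *
            (((2 : ℕ) * r τ ^ 1 *
              (-((r τ) ^ 3 / ((r τ) ^ 2 + 2)) * Real.exp (2 * w τ) * Real.cos (φ τ))) /
              ((r τ) ^ 2) ^ 2))) *
          Real.sin (φ τ) +
        Real.exp (w τ) * Real.exp (-1 / (r τ) ^ 2) *
          (Real.cos (φ τ) * ((Real.exp (2 * w τ) - (r τ) ^ 2) * Real.sin (φ τ))) = 0 := by
    field_simp
    ring
  simp only [Pi.mul_apply] at hF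
  rw [hzero] at hF
  exact hF.congr_of_eventuallyEq heq.symm
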